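/- Let m = ⌊n/2⌋ and q_{km} = C(k-1,m)/C(n,m). Then ∏_{k=1}^n (1 − q_{km}) → ∏_{k=1}^∞ (1 − 2^{-k}) as n → ∞. -/

import Mathlib

open Filter Finset

noncomputable def aux_a (n j : ℕ) : ℝ :=
  (Nat.choose (n - 1 - j) (n / 2) : ℝ) / (Nat.choose n (n / 2) : ℝ)

lemma aux_a_nonneg (n j : ℕ) : 0 ≤ aux_a n j := by
  unfold aux_a; positivity

lemma aux_ratio (n m j : ℕ) (h : m + j + 1 ≤ n) :
    (Nat.choose (n - 1 - j) m : ℝ) / (Nat.choose n m : ℝ) =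
      ∏ i ∈ range (j + 1), (((n : ℝ) - m - i) / ((n : ℝ) - i)) := by
  induction j with
  | zero =>
      have h1 : 1 ≤ n := by omega
      have key := Nat.choose_mul_succ_eq (n - 1) m
      rw [Nat.sub_add_cancel h1] at key
      have hm : m ≤ n := by omega
      have hC : (0:ℝ) < (Nat.choose n m : ℝ) := by
        exact_mod_cast Nat.choose_pos hm
      have hn : (0:ℝ) < (n:ℝ) := by exact_mod_cast h1
      have key' : ((n-1).choose m : ℝ) * n = (Nat.choose n m : ℝ) * ((n:ℝ) - m) := by
        have := congrArg (Nat.cast (R := ℝ)) key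
        push_cast [Nat.cast_sub hm] at this
        convert this using 2
      simp only [zero_add, range_one, prod_singleton, Nat.cast_zero, sub_zero, Nat.sub_zero]
      field_simp
      linarith [key']
  | succ j ih =>
      have hj : m + j + 1 ≤ n := by omega
      have ih' := ih hj
      rw [prod_range_succ, ← ih']
      set n' := n - 1 - j with hn'
      have hn'1 : 1 ≤ n' := by omega
      have key := Nat.choose_mul_succ_eq (n' - 1) m
      rw [Nat.sub_add_cancel hn'1] at key
      have hm : m ≤ n' := by omega
      have key' : ((n' - 1).choose m : ℝ) * n' = (n'.choose m : ℝ) * ((n':ℝ) - m) := by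
        have := congrArg (Nat.cast (R := ℝ)) key
        push_cast [Nat.cast_sub hm] at this
        convert this using 2
      have e1 : n - 1 - (j + 1) = n' - 1 := by omega
      have e2 : ((n':ℝ)) = (n:ℝ) - ((j:ℝ) + 1) := by
        have h5 : (n' : ℕ) = n - (j+1) := by omega
        rw [h5, Nat.cast_sub (by omega)]
        push_cast
        ring
      have e3 : ((n':ℝ)) - m = (n:ℝ) - m - ((j:ℝ) + 1) := by rw [e2]; ring
      have hn'pos : (0:ℝ) < (n':ℝ) := by exact_mod_cast hn'1
      have hCpos : (0:ℝ) < (Nat.choose n m : ℝ) := by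
        exact_mod_cast Nat.choose_pos (by omega : m ≤ n)
      rw [e1]
      push_cast
      rw [← e2, ← e3]
      field_simp
      nlinarith [key']

lemma aux_half : Tendsto (fun n : ℕ => ((n / 2 : ℕ) : ℝ) / (n : ℝ)) atTop (nhds (1/2)) := by
  have h1 : Tendsto (fun n : ℕ => (1:ℝ)/2 - 1/(n:ℝ)) atTop (nhds (1/2)) := by
    simpa using tendsto_const_nhds.sub (tendsto_one_div_atTop_nhds_zero_nat (𝕜 := ℝ))
  refine tendsto_of_tendsto_of_tendsto_of_le_of_le' h1 tendsto_const_nhds ?_ ?_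
  · filter_upwards [eventually_ge_atTop 2] with n hn
    have hnp : (0:ℝ) < (n:ℝ) := by positivity
    have h2 : ((n - 1 : ℕ):ℝ) ≤ 2 * ((n/2 : ℕ) : ℝ) := by
      exact_mod_cast (show n - 1 ≤ 2 * (n/2) by omega)
    rw [Nat.cast_sub (by omega)] at h2
    rw [le_div_iff₀ hnp]
    have h3 : (1/(n:ℝ)) * n = 1 := by field_simp
    nlinarith
  · filter_upwards [eventually_ge_atTop 1] with n hn
    have hnp : (0:ℝ) < (n:ℝ) := by exact_mod_cast hn
    rw [div_le_iff₀ hnp]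
    nlinarith [(by exact_mod_cast (show 2 * (n/2) ≤ n by omega) : 2 * ((n/2:ℕ):ℝ) ≤ (n:ℝ))]

lemma aux_factor (i : ℕ) :
    Tendsto (fun n : ℕ => ((n:ℝ) - ((n/2:ℕ):ℝ) - i) / ((n:ℝ) - i)) atTop (nhds (1/2)) := by
  have hnum : Tendsto (fun n : ℕ => 1 - ((n/2:ℕ):ℝ)/(n:ℝ) - i/(n:ℝ)) atTop
      (nhds (1 - 1/2 - 0)) :=
    (tendsto_const_nhds.sub aux_half).sub
      (tendsto_const_nhds.div_atTop tendsto_natCast_atTop_atTop)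
  have hden : Tendsto (fun n : ℕ => 1 - (i:ℝ)/(n:ℝ)) atTop (nhds (1 - 0)) :=
    tendsto_const_nhds.sub (tendsto_const_nhds.div_atTop tendsto_natCast_atTop_atTop)
  have hmain := hnum.div hden (by norm_num)
  refine Tendsto.congr' ?_ (by convert hmain using 2; norm_num)
  filter_upwards [eventually_ge_atTop 1] with n hn
  have hnp : (0:ℝ) < (n:ℝ) := by exact_mod_cast hn
  rw [Pi.div_apply]
  field_simp

lemma aux_a_tendsto (j : ℕ) :
    Tendsto (fun n : ℕ => aux_a n j) atTop (nhds ((1/2 : ℝ) ^ (j + 1))) := by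
  have hprod : Tendsto (fun n : ℕ => ∏ i ∈ range (j+1),
      (((n:ℝ) - ((n/2:ℕ):ℝ) - i) / ((n:ℝ) - i))) atTop (nhds ((1/2 : ℝ) ^ (j+1))) := by
    have := tendsto_finset_prod (range (j+1))
      (fun i _ => aux_factor i)
    simpa using this
  refine Tendsto.congr' ?_ hprod
  filter_upwards [eventually_ge_atTop (2*j + 4)] with n hn
  have h : n/2 + j + 1 ≤ n := by omega
  exact (aux_ratio n (n/2) j h).symm

lemma aux_a_le (n j : ℕ) (hn : 2 ≤ n) : aux_a n j ≤ (3/4 : ℝ) ^ (j + 1) := by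
  by_cases h : n/2 + j + 1 ≤ n
  · rw [aux_a, aux_ratio n (n/2) j h]
    have hb : ∀ i ∈ range (j+1),
        ((n:ℝ) - ((n/2:ℕ):ℝ) - i) / ((n:ℝ) - i) ≤ 3/4 ∧
        0 ≤ ((n:ℝ) - ((n/2:ℕ):ℝ) - i) / ((n:ℝ) - i) := by
      intro i hi
      rw [mem_range] at hi
      have hi' : i ≤ j := by omega
      have h1 : (i:ℝ) ≤ (j:ℝ) := by exact_mod_cast hi'
      have hden : (0:ℝ) < (n:ℝ) - i := by
        have : i < n := by omega
        have := (Nat.cast_lt (α := ℝ)).2 this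
        linarith
      have hmle : ((n/2:ℕ):ℝ) + i ≤ (n:ℝ) - 1 := by
        have : n/2 + i + 1 ≤ n := by omega
        have := (Nat.cast_le (α := ℝ)).2 this
        push_cast at this
        linarith
      have hm4 : (n:ℝ) ≤ 4 * ((n/2:ℕ):ℝ) + i := by
        have : n ≤ 4 * (n/2) + i := by omega
        have := (Nat.cast_le (α := ℝ)).2 this
        push_cast at this
        linarith
      constructor
      · rw [div_le_iff₀ hden]; linarith
      · apply div_nonneg _ hden.le; linarith
    calc (∏ i ∈ range (j+1), (((n:ℝ) - ((n/2:ℕ):ℝ) - i) / ((n:ℝ) - i)))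
        ≤ ∏ i ∈ range (j+1), (3/4 : ℝ) := by
          apply Finset.prod_le_prod (fun i hi => (hb i hi).2) (fun i hi => (hb i hi).1)
      _ = (3/4 : ℝ) ^ (j+1) := by rw [prod_const, card_range]
  · have : n - 1 - j < n/2 := by omega
    rw [aux_a, Nat.choose_eq_zero_of_lt this]
    simp only [Nat.cast_zero, zero_div]
    positivity

lemma aux_log_bound {x : ℝ} (h0 : 0 ≤ x) (h1 : x ≤ 3/4) : |Real.log (1 - x)| ≤ 4 * x := by
  have hpos : (0:ℝ) < 1 - x := by linarith
  have hle : Real.log (1 - x) ≤ 0 := Real.log_nonpos (by linarith) (by linarith)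
  rw [abs_of_nonpos hle, ← Real.log_inv]
  have h2 : Real.log (1 - x)⁻¹ ≤ (1 - x)⁻¹ - 1 :=
    Real.log_le_sub_one_of_pos (by positivity)
  have h3 : (1 - x)⁻¹ - 1 = x / (1 - x) := by field_simp; ring
  have h4 : x / (1 - x) ≤ 4 * x := by
    rw [div_le_iff₀ hpos]; nlinarith
  linarith [h2.trans_eq h3 |>.trans h4]

lemma aux_pow_lt_one (j : ℕ) : ((1:ℝ)/2) ^ (j+1) < 1 :=
  pow_lt_one₀ (by norm_num) (by norm_num) (by omega)

lemma aux_a_lt_one (n j : ℕ) (hn : 2 ≤ n) : aux_a n j < 1 := by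
  have h1 := aux_a_le n j hn
  have h2 : ((3:ℝ)/4) ^ (j+1) < 1 := pow_lt_one₀ (by norm_num) (by norm_num) (by omega)
  linarith

theorem max_rank_probability_limit :
    Tendsto
      (fun n : ℕ =>
        ∏ k ∈ Finset.Icc 1 n,
          ((1 : ℝ) - (Nat.choose (k - 1) (n / 2) : ℝ) / (Nat.choose n (n / 2) : ℝ)))
      atTop (nhds (∏' k : ℕ, ((1 : ℝ) - (1 / 2) ^ (k + 1)))) := by
  set L : ℕ → ℝ := fun j => Real.log (1 - (1/2 : ℝ) ^ (j+1)) with hL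
  have hbound_summable : Summable (fun j : ℕ => 4 * (3/4 : ℝ) ^ (j+1)) := by
    have hg : Summable (fun j : ℕ => (3/4 : ℝ) ^ j) :=
      summable_geometric_of_lt_one (by norm_num) (by norm_num)
    exact (hg.mul_left 3).congr (fun j => by rw [pow_succ]; ring)
  have hLpos : ∀ j : ℕ, (0:ℝ) < 1 - (1/2 : ℝ) ^ (j+1) := fun j => by
    linarith [aux_pow_lt_one j]
  -- pointwise convergence of logs
  have hpt : ∀ j : ℕ, Tendsto (fun n : ℕ => Real.log (1 - aux_a n j)) atTop
      (nhds (L j)) := by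
    intro j
    have h1 : Tendsto (fun n : ℕ => 1 - aux_a n j) atTop
        (nhds (1 - (1/2 : ℝ) ^ (j+1))) := tendsto_const_nhds.sub (aux_a_tendsto j)
    exact ((Real.continuousAt_log (ne_of_gt (hLpos j))).tendsto).comp h1
  -- uniform bound
  have hbd : ∀ᶠ n in atTop, ∀ j : ℕ, ‖Real.log (1 - aux_a n j)‖ ≤ 4 * (3/4 : ℝ) ^ (j+1) := by
    filter_upwards [eventually_ge_atTop 2] with n hn j
    have ha0 := aux_a_nonneg n j
    have ha1 := aux_a_le n j hn
    have ha34 : aux_a n j ≤ 3/4 := by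
      have : ((3:ℝ)/4) ^ (j+1) ≤ (3/4 : ℝ) ^ 1 :=
        pow_le_pow_of_le_one (by norm_num) (by norm_num) (by omega)
      simpa using ha1.trans this
    have := aux_log_bound ha0 ha34
    rw [Real.norm_eq_abs]
    linarith
  have hA : Tendsto (fun n : ℕ => ∑' j : ℕ, Real.log (1 - aux_a n j)) atTop
      (nhds (∑' j : ℕ, L j)) :=
    tendsto_tsum_of_dominated_convergence hbound_summable hpt hbd
  -- identify the tprod with exp of the sum
  have hLsummable : Summable L := by
    refine Summable.of_norm_bounded hbound_summable (fun j => ?_)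
    have h12 : ((1:ℝ)/2) ^ (j+1) ≤ 3/4 := by
      have : ((1:ℝ)/2) ^ (j+1) ≤ (1/2 : ℝ) ^ 1 :=
        pow_le_pow_of_le_one (by norm_num) (by norm_num) (by omega)
      simpa using this.trans (by norm_num)
    have h0 : (0:ℝ) ≤ (1/2 : ℝ) ^ (j+1) := by positivity
    have hb := aux_log_bound h0 h12
    have hpow : ((1:ℝ)/2) ^ (j+1) ≤ (3/4 : ℝ) ^ (j+1) :=
      pow_le_pow_left₀ (by norm_num) (by norm_num) _
    rw [Real.norm_eq_abs]
    calc |L j| ≤ 4 * (1/2 : ℝ) ^ (j+1) := hb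
      _ ≤ 4 * (3/4 : ℝ) ^ (j+1) := by linarith
  have hprod : HasProd (fun k : ℕ => (1:ℝ) - (1/2 : ℝ) ^ (k+1))
      (Real.exp (∑' j : ℕ, L j)) := by
    have h := hLsummable.hasSum.rexp
    have heq : (Real.exp ∘ L) = fun k : ℕ => (1:ℝ) - (1/2 : ℝ) ^ (k+1) :=
      funext fun k => Real.exp_log (hLpos k)
    rwa [heq] at h
  rw [hprod.tprod_eq]
  -- the original product equals exp of the tsum, eventually
  refine Tendsto.congr' ?_ ((Real.continuous_exp.tendsto _).comp hA)
  filter_upwards [eventually_ge_atTop 2] with n hn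
  have hm1 : 1 ≤ n / 2 := by omega
  have hzero : ∀ j ∉ range n, Real.log (1 - aux_a n j) = 0 := by
    intro j hj
    rw [mem_range, not_lt] at hj
    have h1 : n - 1 - j = 0 := by omega
    have : aux_a n j = 0 := by
      rw [aux_a, h1, Nat.choose_eq_zero_of_lt (by omega : 0 < n/2)]
      simp
    rw [this]
    simp
  have htsum : ∑' j : ℕ, Real.log (1 - aux_a n j)
      = ∑ j ∈ range n, Real.log (1 - aux_a n j) := tsum_eq_sum hzero
  have hexp : Real.exp (∑ j ∈ range n, Real.log (1 - aux_a n j))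
      = ∏ j ∈ range n, (1 - aux_a n j) := by
    rw [Real.exp_sum]
    exact Finset.prod_congr rfl fun j _ =>
      Real.exp_log (by linarith [aux_a_lt_one n j hn])
  have hreflect : (∏ j ∈ range n, (1 - aux_a n j))
      = ∏ j ∈ range n, ((1:ℝ) - (Nat.choose j (n/2) : ℝ) / (Nat.choose n (n/2) : ℝ)) := by
    have := prod_range_reflect
      (fun j => (1:ℝ) - (Nat.choose j (n/2) : ℝ) / (Nat.choose n (n/2) : ℝ)) n
    rw [← this]
    exact Finset.prod_congr rfl fun j _ => by rw [aux_a]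
  have hIcc : (∏ k ∈ Finset.Icc 1 n,
        ((1:ℝ) - (Nat.choose (k-1) (n/2) : ℝ) / (Nat.choose n (n/2) : ℝ)))
      = ∏ j ∈ range n, ((1:ℝ) - (Nat.choose j (n/2) : ℝ) / (Nat.choose n (n/2) : ℝ)) := by
    rw [← Finset.Ico_add_one_right_eq_Icc, Finset.prod_Ico_eq_prod_range]
    rw [show n + 1 - 1 = n from rfl]
    refine Finset.prod_congr rfl fun k _ => ?_
    rw [show 1 + k - 1 = k from by omega]
  show Real.exp (∑' j : ℕ, Real.log (1 - aux_a n j)) =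
    ∏ k ∈ Finset.Icc 1 n,
      ((1 : ℝ) - (Nat.choose (k - 1) (n / 2) : ℝ) / (Nat.choose n (n / 2) : ℝ))
  rw [htsum, hexp, hreflect, hIcc]
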